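/- Let A be a positive self-adjoint operator with trivial kernel on L²(X) for a sigma-finite measure space X, and p > 1. Suppose that for every operator γ with 0 ≤ γ ≤ A and finite trace of γ^{1/2} A^{-1} γ^{1/2}, one has tr γ^{1/2} A^{-1} γ^{1/2} ≥ K ∫_X γ(x,x)^{p'} dx with p' = p/(p-1). Then for every non-negative b ∈ L_p(X) and μ > 0, tr(A^{1/2} b A^{1/2} - μ)_+ ≤ D μ^{-p+1} ∫_X b^p dx with D = K^{-p+1} (p-1)^{p-1}/p^p. -/

import Mathlib

open MeasureTheory Real ENNReal

section AuxLemmas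

variable {X : Type*} [MeasurableSpace X] {μX : Measure X}

private lemma form_expand (R : Lp ℂ 2 μX →ₗ[ℂ] Lp ℂ 2 μX) (s t : ℂ) (u v : Lp ℂ 2 μX) :
    (inner ℂ (s • u + t • v) (R (s • u + t • v)) : ℂ)
      = (starRingEnd ℂ) s * s * (inner ℂ u (R u) : ℂ)
        + (starRingEnd ℂ) s * t * (inner ℂ u (R v) : ℂ)
        + (starRingEnd ℂ) t * s * (inner ℂ v (R u) : ℂ)
        + (starRingEnd ℂ) t * t * (inner ℂ v (R v) : ℂ) := by
  simp only [map_add, LinearMap.map_smul, inner_add_left, inner_add_right, inner_smul_left,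
    inner_smul_right]
  ring

private lemma form_herm (R : Lp ℂ 2 μX →ₗ[ℂ] Lp ℂ 2 μX)
    (hRsym : ∀ f g : Lp ℂ 2 μX, (inner ℂ f (R g) : ℂ) = inner ℂ (R f) g)
    (a b : Lp ℂ 2 μX) :
    (inner ℂ b (R a) : ℂ) = (starRingEnd ℂ) (inner ℂ a (R b) : ℂ) := by
  rw [hRsym b a, ← inner_conj_symm]

private lemma form_real (R : Lp ℂ 2 μX →ₗ[ℂ] Lp ℂ 2 μX)
    (hRsym : ∀ f g : Lp ℂ 2 μX, (inner ℂ f (R g) : ℂ) = inner ℂ (R f) g)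
    (a : Lp ℂ 2 μX) :
    (inner ℂ a (R a) : ℂ) = (((inner ℂ a (R a) : ℂ)).re : ℂ) := by
  have h := (form_herm R hRsym a a).symm
  rw [Complex.conj_eq_iff_re] at h
  exact h.symm

private lemma conj_mul_self_eq (z : ℂ) :
    z * (starRingEnd ℂ) z = ((‖z‖ : ℝ) : ℂ) ^ 2 := by
  rw [Complex.mul_conj]
  norm_cast
  rw [Complex.normSq_eq_norm_sq]

private lemma form_cs (R : Lp ℂ 2 μX →ₗ[ℂ] Lp ℂ 2 μX)
    (hRsym : ∀ f g : Lp ℂ 2 μX, (inner ℂ f (R g) : ℂ) = inner ℂ (R f) g)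
    (hRpos : ∀ f : Lp ℂ 2 μX, 0 ≤ ((inner ℂ f (R f) : ℂ)).re)
    (u v : Lp ℂ 2 μX) :
    ‖(inner ℂ u (R v) : ℂ)‖ ^ 2 ≤ ((inner ℂ u (R u) : ℂ)).re * ((inner ℂ v (R v) : ℂ)).re := by
  have key : ∀ a b : Lp ℂ 2 μX, 0 < ((inner ℂ b (R b) : ℂ)).re →
      ‖(inner ℂ a (R b) : ℂ)‖ ^ 2 ≤ ((inner ℂ a (R a) : ℂ)).re * ((inner ℂ b (R b) : ℂ)).re := by
    intro a b hd
    have h0 := hRpos ((((inner ℂ b (R b) : ℂ)).re : ℂ) • a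
      + (-(starRingEnd ℂ) (inner ℂ a (R b) : ℂ)) • b)
    rw [form_expand] at h0
    set d : ℝ := ((inner ℂ b (R b) : ℂ)).re with hdd
    set ar : ℝ := ((inner ℂ a (R a) : ℂ)).re with har
    set z : ℂ := (inner ℂ a (R b) : ℂ) with hzz
    have hexpr : (starRingEnd ℂ) ((d : ℂ)) * (d : ℂ) * (inner ℂ a (R a) : ℂ)
        + (starRingEnd ℂ) ((d : ℂ)) * (-(starRingEnd ℂ) z) * (inner ℂ a (R b) : ℂ)
        + (starRingEnd ℂ) (-(starRingEnd ℂ) z) * (d : ℂ) * (inner ℂ b (R a) : ℂ)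
        + (starRingEnd ℂ) (-(starRingEnd ℂ) z) * (-(starRingEnd ℂ) z) * (inner ℂ b (R b) : ℂ)
        = ((d * d * ar - d * ‖z‖ ^ 2 : ℝ) : ℂ) := by
      rw [form_herm R hRsym a b, ← hzz, form_real R hRsym a, form_real R hRsym b, ← hdd, ← har]
      simp only [Complex.conj_ofReal, map_neg, Complex.conj_conj]
      push_cast
      linear_combination (-(d : ℂ)) * conj_mul_self_eq z
    rw [hexpr, Complex.ofReal_re] at h0
    have h1 : d * ‖z‖ ^ 2 ≤ d * (ar * d) := by nlinarith [h0]
    exact le_of_mul_le_mul_left h1 hd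
  rcases lt_or_eq_of_le (hRpos v) with hv | hv
  · exact key u v hv
  · rcases lt_or_eq_of_le (hRpos u) with hu | hu
    · have h := key v u hu
      have hn : ‖(inner ℂ u (R v) : ℂ)‖ = ‖(inner ℂ v (R u) : ℂ)‖ := by
        rw [form_herm R hRsym u v]
        exact (norm_star _).symm
      rw [hn]
      calc ‖(inner ℂ v (R u) : ℂ)‖ ^ 2
          ≤ ((inner ℂ v (R v) : ℂ)).re * ((inner ℂ u (R u) : ℂ)).re := h
        _ = ((inner ℂ u (R u) : ℂ)).re * ((inner ℂ v (R v) : ℂ)).re := by ring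
    · -- both forms vanish
      have hQu : (inner ℂ u (R u) : ℂ) = 0 := by
        rw [form_real R hRsym u, ← hu]; simp
      have hQv : (inner ℂ v (R v) : ℂ) = 0 := by
        rw [form_real R hRsym v, ← hv]; simp
      have h0 := hRpos ((1 : ℂ) • u + (-(starRingEnd ℂ) (inner ℂ u (R v) : ℂ)) • v)
      rw [form_expand] at h0
      set z : ℂ := (inner ℂ u (R v) : ℂ) with hzz
      have hexpr : (starRingEnd ℂ) (1 : ℂ) * (1 : ℂ) * (inner ℂ u (R u) : ℂ)
          + (starRingEnd ℂ) (1 : ℂ) * (-(starRingEnd ℂ) z) * (inner ℂ u (R v) : ℂ)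
          + (starRingEnd ℂ) (-(starRingEnd ℂ) z) * (1 : ℂ) * (inner ℂ v (R u) : ℂ)
          + (starRingEnd ℂ) (-(starRingEnd ℂ) z) * (-(starRingEnd ℂ) z) * (inner ℂ v (R v) : ℂ)
          = ((-(2 * ‖z‖ ^ 2) : ℝ) : ℂ) := by
        rw [hQu, hQv, form_herm R hRsym u v, ← hzz]
        simp only [map_one, map_neg, Complex.conj_conj, one_mul, mul_one, mul_zero,
          zero_add, add_zero]
        push_cast
        linear_combination (-(2 : ℂ)) * conj_mul_self_eq z
      rw [hexpr, Complex.ofReal_re] at h0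
      rw [← hu, ← hv]
      nlinarith [h0]

private lemma form_bessel (R : Lp ℂ 2 μX →ₗ[ℂ] Lp ℂ 2 μX)
    (hRsym : ∀ f g : Lp ℂ 2 μX, (inner ℂ f (R g) : ℂ) = inner ℂ (R f) g)
    (hRpos : ∀ f : Lp ℂ 2 μX, 0 ≤ ((inner ℂ f (R f) : ℂ)).re)
    {m : ℕ} (g : Fin m → Lp ℂ 2 μX)
    (hortho : ∀ i j, (inner ℂ (g i) (R (g j)) : ℂ) = if i = j then 1 else 0)
    (f : Lp ℂ 2 μX) :
    ∑ j, ‖(inner ℂ (g j) (R f) : ℂ)‖ ^ 2 ≤ ((inner ℂ f (R f) : ℂ)).re := by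
  classical
  set c : Fin m → ℂ := fun j => (inner ℂ (g j) (R f) : ℂ) with hc
  set S : Lp ℂ 2 μX := ∑ j, c j • g j with hS
  have hRS : R S = ∑ j, c j • R (g j) := by
    rw [hS, map_sum]; simp only [LinearMap.map_smul]
  have hcsq : ∀ j, c j * (starRingEnd ℂ) (c j) = (((‖c j‖ ^ 2 : ℝ)) : ℂ) := by
    intro j
    rw [conj_mul_self_eq (c j)]
    push_cast
    ring
  have h1 : (inner ℂ S (R f) : ℂ) = ((∑ j, ‖c j‖ ^ 2 : ℝ) : ℂ) := by
    rw [hS, sum_inner, Complex.ofReal_sum]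
    refine Finset.sum_congr rfl fun j _ => ?_
    rw [inner_smul_left, mul_comm]
    exact hcsq j
  have hfgj : ∀ j, (inner ℂ f (R (g j)) : ℂ) = (starRingEnd ℂ) (c j) := by
    intro j
    rw [hRsym f (g j), ← inner_conj_symm, hc]
  have h2 : (inner ℂ f (R S) : ℂ) = ((∑ j, ‖c j‖ ^ 2 : ℝ) : ℂ) := by
    rw [hRS, inner_sum, Complex.ofReal_sum]
    refine Finset.sum_congr rfl fun j _ => ?_
    rw [inner_smul_right, hfgj j]
    exact hcsq j
  have h3 : (inner ℂ S (R S) : ℂ) = ((∑ j, ‖c j‖ ^ 2 : ℝ) : ℂ) := by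
    rw [hS, sum_inner, Complex.ofReal_sum]
    refine Finset.sum_congr rfl fun j _ => ?_
    rw [inner_smul_left, hRS, inner_sum]
    have hterm : ∀ k ∈ Finset.univ, (inner ℂ (g j) (c k • R (g k)) : ℂ)
        = if j = k then c k else 0 := by
      intro k _
      rw [inner_smul_right, hortho j k]
      by_cases h : j = k <;> simp [h]
    rw [Finset.sum_congr rfl hterm, Finset.sum_ite_eq]
    simp only [Finset.mem_univ, if_true]
    rw [mul_comm]
    exact hcsq j
  have h0 := hRpos (f - S)
  rw [map_sub, inner_sub_left, inner_sub_right, inner_sub_right, h1, h2, h3] at h0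
  have hre : ((inner ℂ f (R f) : ℂ) - ((∑ j, ‖c j‖ ^ 2 : ℝ) : ℂ)
      - (((∑ j, ‖c j‖ ^ 2 : ℝ) : ℂ) - ((∑ j, ‖c j‖ ^ 2 : ℝ) : ℂ))).re
      = ((inner ℂ f (R f) : ℂ)).re - ∑ j, ‖c j‖ ^ 2 := by
    simp only [Complex.sub_re, Complex.ofReal_re]
    ring
  rw [hre] at h0
  have hid : ∑ j, ‖(inner ℂ (g j) (R f) : ℂ)‖ ^ 2 = ∑ j, ‖c j‖ ^ 2 :=
    Finset.sum_congr rfl fun j _ => by rw [hc]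
  rw [hid]
  linarith

private lemma sq_norm_rpow_integrable
    {p K : ℝ} (hp : 1 < p) (hK : 0 < K) [SigmaFinite μX]
    (R : Lp ℂ 2 μX →ₗ[ℂ] Lp ℂ 2 μX)
    (hRsym : ∀ f g : Lp ℂ 2 μX, (inner ℂ f (R g) : ℂ) = inner ℂ (R f) g)
    (hRpos : ∀ f : Lp ℂ 2 μX, 0 ≤ ((inner ℂ f (R f) : ℂ)).re)
    (hdensity : ∀ (n : ℕ) (φ : Fin n → Lp ℂ 2 μX),
      (∀ f : Lp ℂ 2 μX,
          ∑ j, ‖(inner ℂ (φ j) (R f) : ℂ)‖ ^ 2 ≤ ((inner ℂ f (R f) : ℂ)).re) →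
      K * ∫ x, (∑ j, ‖φ j x‖ ^ 2) ^ (p / (p - 1)) ∂μX
        ≤ ∑ j, ((inner ℂ (φ j) (R (φ j)) : ℂ)).re)
    (u : Lp ℂ 2 μX) :
    Integrable (fun x => (‖u x‖ ^ 2) ^ (p / (p - 1))) μX := by
  have hp0 : (0:ℝ) < p := lt_trans one_pos hp
  have hp1 : (0:ℝ) < p - 1 := by linarith
  set p' : ℝ := p / (p - 1) with hp'def
  have hp'1 : 1 < p' := by rw [hp'def, lt_div_iff₀ hp1]; linarith
  have hp'0 : (0:ℝ) < p' := by linarith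
  have hp'ne : p' ≠ 0 := ne_of_gt hp'0
  -- continuity of R (Hellinger–Toeplitz)
  have hsymm : LinearMap.IsSymmetric R := fun x y => (hRsym x y).symm
  have hcont : Continuous R := hsymm.continuous
  let L : Lp ℂ 2 μX →L[ℂ] Lp ℂ 2 μX := ⟨R, hcont⟩
  -- measurable representative of u
  obtain ⟨w, hwmeas, hwae⟩ : ∃ w : X → ℂ, StronglyMeasurable w ∧ ⇑u =ᵐ[μX] w :=
    ⟨(Lp.aestronglyMeasurable u).mk ⇑u, (Lp.aestronglyMeasurable u).stronglyMeasurable_mk,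
      (Lp.aestronglyMeasurable u).ae_eq_mk⟩
  have hwLp : MemLp w 2 μX := (Lp.memLp u).ae_eq hwae
  have hw2 : Integrable (fun x => ‖w x‖ ^ 2) μX := by
    have h := hwLp.integrable_norm_rpow (by norm_num) (by norm_num)
    refine h.congr (Filter.Eventually.of_forall fun x => ?_)
    norm_num
  set D0 : ℝ := max (‖L‖ * ‖u‖ * ‖u‖) 1 with hD0
  have hD0pos : (0:ℝ) < D0 := lt_of_lt_of_le one_pos (le_max_right _ _)
  set F : ℕ → X → ℂ := fun N => ({x | ‖w x‖ ≤ (N:ℝ)}).indicator w with hF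
  have hAmeas : ∀ N : ℕ, MeasurableSet {x | ‖w x‖ ≤ (N:ℝ)} := fun N =>
    measurableSet_le hwmeas.measurable.norm measurable_const
  have hFmeas : ∀ N, StronglyMeasurable (F N) := fun N => hwmeas.indicator (hAmeas N)
  have hFw : ∀ N x, ‖F N x‖ ≤ ‖w x‖ := by
    intro N x
    by_cases hx : x ∈ {x | ‖w x‖ ≤ (N:ℝ)}
    · rw [show F N x = w x from Set.indicator_of_mem hx w]
    · rw [show F N x = 0 from Set.indicator_of_notMem hx w]; simp
  have hFbd : ∀ N x, ‖F N x‖ ≤ (N:ℝ) := by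
    intro N x
    by_cases hx : x ∈ {x | ‖w x‖ ≤ (N:ℝ)}
    · rw [show F N x = w x from Set.indicator_of_mem hx w]; exact hx
    · rw [show F N x = 0 from Set.indicator_of_notMem hx w]; simp
  have hFsqmeas : ∀ N, Measurable fun x => (‖F N x‖ ^ 2) ^ p' := fun N =>
    (Real.continuous_rpow_const hp'0.le).measurable.comp
      ((hFmeas N).measurable.norm.pow_const 2)
  -- uniform bound on the truncations, via `hdensity`
  have main : ∀ N : ℕ, ∫ x, (‖F N x‖ ^ 2) ^ p' ∂μX ≤ D0 ^ p' / K := by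
    intro N
    have hFLp : MemLp (F N) 2 μX := hwLp.indicator (hAmeas N)
    set φ : Lp ℂ 2 μX := hFLp.toLp (F N) with hφ
    have hφcoe : ⇑φ =ᵐ[μX] F N := MemLp.coeFn_toLp hFLp
    have hφnorm : ‖φ‖ ≤ ‖u‖ := by
      rw [hφ, Lp.norm_toLp, Lp.norm_def]
      apply ENNReal.toReal_mono (Lp.eLpNorm_ne_top u)
      calc eLpNorm (F N) 2 μX ≤ eLpNorm w 2 μX := eLpNorm_mono (hFw N)
        _ = eLpNorm (⇑u) 2 μX := (eLpNorm_congr_ae hwae).symm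
    set q : ℝ := ((inner ℂ φ (R φ) : ℂ)).re with hq
    have hq0 : 0 ≤ q := hRpos φ
    have hqD0 : q ≤ D0 := by
      have h1 : q ≤ ‖(inner ℂ φ (R φ) : ℂ)‖ := by
        rw [hq]; exact Complex.re_le_norm _
      have h2 : ‖(inner ℂ φ (R φ) : ℂ)‖ ≤ ‖φ‖ * ‖R φ‖ := norm_inner_le_norm _ _
      have h3 : ‖R φ‖ ≤ ‖L‖ * ‖φ‖ := L.le_opNorm φ
      have h4 : ‖φ‖ * ‖R φ‖ ≤ ‖L‖ * ‖u‖ * ‖u‖ := by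
        have h5 : (0:ℝ) ≤ ‖φ‖ := norm_nonneg _
        have h6 : (0:ℝ) ≤ ‖L‖ := norm_nonneg _
        have h7 : (0:ℝ) ≤ ‖u‖ := norm_nonneg _
        calc ‖φ‖ * ‖R φ‖ ≤ ‖φ‖ * (‖L‖ * ‖φ‖) := mul_le_mul_of_nonneg_left h3 h5
          _ = ‖L‖ * (‖φ‖ * ‖φ‖) := by ring
          _ ≤ ‖L‖ * (‖u‖ * ‖u‖) := mul_le_mul_of_nonneg_left
              (mul_le_mul hφnorm hφnorm h5 h7) h6
          _ = ‖L‖ * ‖u‖ * ‖u‖ := by ring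
      calc q ≤ ‖φ‖ * ‖R φ‖ := le_trans h1 h2
        _ ≤ ‖L‖ * ‖u‖ * ‖u‖ := h4
        _ ≤ D0 := le_max_left _ _
    set r : ℝ := D0 ^ (-(1:ℝ)/2) with hr
    have hr0 : 0 < r := Real.rpow_pos_of_pos hD0pos _
    have hr2 : r ^ 2 = D0⁻¹ := by
      rw [hr, sq, ← Real.rpow_add hD0pos]
      norm_num [Real.rpow_neg_one]
    set v : Lp ℂ 2 μX := ((r : ℝ) : ℂ) • φ with hv
    have hvv : ((inner ℂ v (R v) : ℂ)).re = r ^ 2 * q := by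
      rw [hv, LinearMap.map_smul, inner_smul_left, inner_smul_right, Complex.conj_ofReal,
        ← mul_assoc, ← Complex.ofReal_mul, Complex.re_ofReal_mul, ← hq, ← sq]
    have hvv1 : ((inner ℂ v (R v) : ℂ)).re ≤ 1 := by
      rw [hvv, hr2, ← div_eq_inv_mul]
      exact (div_le_one hD0pos).mpr hqD0
    have hadm : ∀ f0 : Lp ℂ 2 μX,
        ∑ j : Fin 1, ‖(inner ℂ ((fun _ : Fin 1 => v) j) (R f0) : ℂ)‖ ^ 2
          ≤ ((inner ℂ f0 (R f0) : ℂ)).re := by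
      intro f0
      rw [Fin.sum_univ_one]
      calc ‖(inner ℂ v (R f0) : ℂ)‖ ^ 2
          ≤ ((inner ℂ v (R v) : ℂ)).re * ((inner ℂ f0 (R f0) : ℂ)).re :=
            form_cs R hRsym hRpos v f0
        _ ≤ 1 * ((inner ℂ f0 (R f0) : ℂ)).re := mul_le_mul_of_nonneg_right hvv1 (hRpos f0)
        _ = ((inner ℂ f0 (R f0) : ℂ)).re := one_mul _
    have hins := hdensity 1 (fun _ => v) hadm
    simp only [Fin.sum_univ_one] at hins
    have hcoe2 : ⇑v =ᵐ[μX] fun x => ((r : ℝ) : ℂ) * F N x := by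
      rw [hv]
      refine (Lp.coeFn_smul _ _).trans ?_
      filter_upwards [hφcoe] with x hx
      simp [hx]
    have hinteq : ∫ x, (‖v x‖ ^ 2) ^ p' ∂μX
        = D0⁻¹ ^ p' * ∫ x, (‖F N x‖ ^ 2) ^ p' ∂μX := by
      rw [← integral_const_mul]
      apply integral_congr_ae
      filter_upwards [hcoe2] with x hx
      rw [hx, norm_mul, Complex.norm_real, Real.norm_of_nonneg hr0.le, mul_pow, hr2,
        Real.mul_rpow (by positivity) (by positivity)]
    rw [hinteq, hvv] at hins
    have hvv1' : r ^ 2 * q ≤ 1 := by rw [← hvv]; exact hvv1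
    have hKI : K * (D0⁻¹ ^ p' * ∫ x, (‖F N x‖ ^ 2) ^ p' ∂μX) ≤ 1 := le_trans hins hvv1'
    have hD0p : (0:ℝ) < D0 ^ p' := Real.rpow_pos_of_pos hD0pos _
    have hKI' : K * ((D0 ^ p')⁻¹ * ∫ x, (‖F N x‖ ^ 2) ^ p' ∂μX) ≤ 1 := by
      rw [← Real.inv_rpow hD0pos.le]
      exact hKI
    have h5 : K * ∫ x, (‖F N x‖ ^ 2) ^ p' ∂μX ≤ D0 ^ p' := by
      have h6 := mul_le_mul_of_nonneg_left hKI' (le_of_lt hD0p)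
      calc K * ∫ x, (‖F N x‖ ^ 2) ^ p' ∂μX
          = D0 ^ p' * (K * ((D0 ^ p')⁻¹ * ∫ x, (‖F N x‖ ^ 2) ^ p' ∂μX)) := by
            field_simp
        _ ≤ D0 ^ p' * 1 := h6
        _ = D0 ^ p' := mul_one _
    rw [le_div_iff₀ hK]
    linarith
  -- integrability of each truncation
  have hFint : ∀ N : ℕ, Integrable (fun x => (‖F N x‖ ^ 2) ^ p') μX := by
    intro N
    refine Integrable.mono' (hw2.const_mul ((N:ℝ) ^ (2 * p' - 2)))
      ((hFsqmeas N).aestronglyMeasurable) ?_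
    refine Filter.Eventually.of_forall fun x => ?_
    rw [Real.norm_of_nonneg (by positivity)]
    have h1 : (‖F N x‖ ^ 2) ^ p' = ‖F N x‖ ^ (2 * p') := by
      rw [← Real.rpow_natCast (‖F N x‖) 2, ← Real.rpow_mul (norm_nonneg _)]
      norm_num
    have h2 : ‖F N x‖ ^ (2 * p') = ‖F N x‖ ^ (2 * p' - 2) * ‖F N x‖ ^ (2:ℝ) := by
      rw [← Real.rpow_add' (norm_nonneg _) (by intro h; linarith)]
      norm_num
    rw [h1, h2]
    have h3 : ‖F N x‖ ^ (2 * p' - 2) ≤ (N:ℝ) ^ (2 * p' - 2) :=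
      Real.rpow_le_rpow (norm_nonneg _) (hFbd N x) (by linarith)
    have h4 : ‖F N x‖ ^ (2:ℝ) ≤ ‖w x‖ ^ 2 := by
      rw [Real.rpow_two]
      exact pow_le_pow_left₀ (norm_nonneg _) (hFw N x) 2
    have h5 : (0:ℝ) ≤ ‖F N x‖ ^ (2:ℝ) := by positivity
    have h6 : (0:ℝ) ≤ (N:ℝ) ^ (2 * p' - 2) := by positivity
    exact mul_le_mul h3 h4 h5 h6
  -- monotone convergence
  have hlin : ∫⁻ x, ENNReal.ofReal ((‖w x‖ ^ 2) ^ p') ∂μX ≤ ENNReal.ofReal (D0 ^ p' / K) := by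
    have hGmeas : ∀ N : ℕ, Measurable fun x => ENNReal.ofReal ((‖F N x‖ ^ 2) ^ p') :=
      fun N => (hFsqmeas N).ennreal_ofReal
    have hGmono : Monotone fun (N : ℕ) (x : X) => ENNReal.ofReal ((‖F N x‖ ^ 2) ^ p') := by
      intro N M hNM x
      apply ENNReal.ofReal_le_ofReal
      by_cases hx : x ∈ {x | ‖w x‖ ≤ (N:ℝ)}
      · have hx0 : ‖w x‖ ≤ (N:ℝ) := hx
        have hx' : x ∈ {x | ‖w x‖ ≤ (M:ℝ)} := le_trans hx0 (Nat.cast_le.mpr hNM)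
        rw [show F N x = w x from Set.indicator_of_mem hx w,
          show F M x = w x from Set.indicator_of_mem hx' w]
      · rw [show F N x = 0 from Set.indicator_of_notMem hx w]
        simp only [norm_zero]
        rw [zero_pow (by norm_num), Real.zero_rpow hp'ne]
        positivity
    have hGsup : ∀ x, (⨆ N : ℕ, ENNReal.ofReal ((‖F N x‖ ^ 2) ^ p'))
        = ENNReal.ofReal ((‖w x‖ ^ 2) ^ p') := by
      intro x
      apply le_antisymm
      · refine iSup_le fun N => ENNReal.ofReal_le_ofReal ?_
        refine Real.rpow_le_rpow (by positivity) ?_ hp'0.le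
        exact pow_le_pow_left₀ (norm_nonneg _) (hFw N x) 2
      · obtain ⟨N, hN⟩ := exists_nat_ge ‖w x‖
        have hmem : x ∈ {x | ‖w x‖ ≤ (N:ℝ)} := hN
        have heq : F N x = w x := Set.indicator_of_mem hmem w
        refine le_trans (le_of_eq ?_)
          (le_iSup (fun N : ℕ => ENNReal.ofReal ((‖F N x‖ ^ 2) ^ p')) N)
        rw [heq]
    calc ∫⁻ x, ENNReal.ofReal ((‖w x‖ ^ 2) ^ p') ∂μX
        = ∫⁻ x, ⨆ N : ℕ, ENNReal.ofReal ((‖F N x‖ ^ 2) ^ p') ∂μX :=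
          lintegral_congr fun x => (hGsup x).symm
      _ = ⨆ N : ℕ, ∫⁻ x, ENNReal.ofReal ((‖F N x‖ ^ 2) ^ p') ∂μX :=
          lintegral_iSup hGmeas hGmono
      _ ≤ ENNReal.ofReal (D0 ^ p' / K) := by
          refine iSup_le fun N => ?_
          rw [← ofReal_integral_eq_lintegral_ofReal (hFint N)
            (Filter.Eventually.of_forall fun x => by positivity)]
          exact ENNReal.ofReal_le_ofReal (main N)
  have hwint : Integrable (fun x => (‖w x‖ ^ 2) ^ p') μX := by
    refine ⟨((Real.continuous_rpow_const hp'0.le).measurable.comp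
      (hwmeas.measurable.norm.pow_const 2)).aestronglyMeasurable, ?_⟩
    rw [hasFiniteIntegral_iff_ofReal (Filter.Eventually.of_forall fun x => by positivity)]
    exact lt_of_le_of_lt hlin ENNReal.ofReal_lt_top
  refine hwint.congr ?_
  filter_upwards [hwae] with x hx
  rw [hx]


end AuxLemmas


/-- Duality (one direction of Lemma 3): let `A` be a positive operator with trivial kernel
on `L²(X)`, `X` sigma-finite, encoded through its (positive, symmetric, injective) inverse
`R = A⁻¹`. Suppose the density inequality (ii): for every finite-rank
`γ = Σ_j |φ_j⟩⟨φ_j|` with `0 ≤ γ ≤ A` (equivalently `⟨Rf, γ Rf⟩ ≤ ⟨f, Rf⟩` for all `f`),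
`tr γ^{1/2} A⁻¹ γ^{1/2} = Σ_j ⟨φ_j, Rφ_j⟩ ≥ K ∫ γ(x,x)^{p'} dx` with
`γ(x,x) = Σ_j |φ_j(x)|²` and `p' = p/(p-1)`. Then the eigenvalue inequality (i) holds:
for every `0 ≤ b ∈ L_p(X)` and `μ > 0`,
`tr(A^{1/2} b A^{1/2} - μ)_+ ≤ D μ^{-p+1} ∫ b^p dx` with `D = K^{-p+1}(p-1)^{p-1}/p^p`.
Variationally the latter trace bound says: for every finite family `g` orthonormal in the
inner ℂ product `⟨·, R·⟩` (i.e. `g_i = A^{1/2} f_i` with `f_i` orthonormal in `L²`),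
`Σ_i (∫ b|g_i|² dx - μ) ≤ D μ^{-p+1} ∫ b^p dx`. -/
theorem duality_density_to_eigenvalue
    {X : Type*} [MeasurableSpace X] {μX : Measure X} [SigmaFinite μX]
    {p K : ℝ} (hp : 1 < p) (hK : 0 < K)
    (R : Lp ℂ 2 μX →ₗ[ℂ] Lp ℂ 2 μX)
    (hRsym : ∀ f g : Lp ℂ 2 μX, (inner ℂ f (R g) : ℂ) = inner ℂ (R f) g)
    (hRpos : ∀ f : Lp ℂ 2 μX, 0 ≤ ((inner ℂ f (R f) : ℂ)).re)
    (hRinj : Function.Injective R)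
    (hdensity : ∀ (n : ℕ) (φ : Fin n → Lp ℂ 2 μX),
      (∀ f : Lp ℂ 2 μX,
          ∑ j, ‖(inner ℂ (φ j) (R f) : ℂ)‖ ^ 2 ≤ ((inner ℂ f (R f) : ℂ)).re) →
      K * ∫ x, (∑ j, ‖φ j x‖ ^ 2) ^ (p / (p - 1)) ∂μX
        ≤ ∑ j, ((inner ℂ (φ j) (R (φ j)) : ℂ)).re)
    (b : X → ℝ) (hb : ∀ x, 0 ≤ b x) (hbLp : MemLp b (ENNReal.ofReal p) μX) :
    ∀ μ : ℝ, 0 < μ → ∀ (m : ℕ) (g : Fin m → Lp ℂ 2 μX),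
      (∀ i j, (inner ℂ (g i) (R (g j)) : ℂ) = if i = j then 1 else 0) →
      ∑ i, ((∫ x, b x * ‖g i x‖ ^ 2 ∂μX) - μ)
        ≤ K ^ (-p + 1) * ((p - 1) ^ (p - 1) / p ^ p) * μ ^ (-p + 1) *
            ∫ x, b x ^ p ∂μX := by
  intro μ hμ m g hortho
  classical
  have hp0 : (0:ℝ) < p := lt_trans one_pos hp
  have hp1 : (0:ℝ) < p - 1 := by linarith
  have hpne : p ≠ 0 := ne_of_gt hp0
  set p' : ℝ := p / (p - 1) with hp'def
  have hp'1 : 1 < p' := by rw [hp'def, lt_div_iff₀ hp1]; linarith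
  have hp'0 : (0:ℝ) < p' := by linarith
  have hp'ne : p' ≠ 0 := ne_of_gt hp'0
  have hconj : p.HolderConjugate p' :=
    (Real.holderConjugate_iff_eq_conjExponent hp).2 hp'def
  have hPzero : ENNReal.ofReal p ≠ 0 := (ENNReal.ofReal_pos.mpr hp0).ne'
  have hPtop : ENNReal.ofReal p ≠ ∞ := ENNReal.ofReal_ne_top
  have hP'zero : ENNReal.ofReal p' ≠ 0 := (ENNReal.ofReal_pos.mpr hp'0).ne'
  have hP'top : ENNReal.ofReal p' ≠ ∞ := ENNReal.ofReal_ne_top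
  have htoR : (ENNReal.ofReal p).toReal = p := ENNReal.toReal_ofReal hp0.le
  have htoR' : (ENNReal.ofReal p').toReal = p' := ENNReal.toReal_ofReal hp'0.le
  -- integrability of (‖g i‖²)^p'
  have hInt2 : ∀ i : Fin m, Integrable (fun x => (‖g i x‖ ^ 2) ^ p') μX := fun i => by
    have h := sq_norm_rpow_integrable hp hK R hRsym hRpos hdensity (g i)
    rw [← hp'def] at h
    exact h
  -- measurability of ‖g i‖²
  have hgmeas : ∀ i : Fin m, AEStronglyMeasurable (fun x => ‖g i x‖ ^ 2) μX := fun i => by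
    have h := (Lp.aestronglyMeasurable (g i)).norm.mul (Lp.aestronglyMeasurable (g i)).norm
    refine h.congr (Filter.Eventually.of_forall fun x => ?_)
    simp only [Pi.mul_apply]
    exact (pow_two _).symm
  -- MemLp of ‖g i‖² with exponent p'
  have hgiMem : ∀ i : Fin m, MemLp (fun x => ‖g i x‖ ^ 2) (ENNReal.ofReal p') μX := fun i => by
    have h2 : MemLp (fun x => ‖(fun y => ‖g i y‖ ^ 2) x‖ ^ (ENNReal.ofReal p').toReal)
        (ENNReal.ofReal p' / ENNReal.ofReal p') μX := by
      rw [ENNReal.div_self hP'zero hP'top, memLp_one_iff_integrable]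
      refine (hInt2 i).congr (Filter.Eventually.of_forall fun x => ?_)
      show (‖g i x‖ ^ 2) ^ p' = ‖‖g i x‖ ^ 2‖ ^ (ENNReal.ofReal p').toReal
      rw [htoR', Real.norm_of_nonneg (by positivity)]
    exact (memLp_norm_rpow_iff (hgmeas i) hP'zero hP'top).mp h2
  -- the density and its integrability
  have hρMem : MemLp (fun x => ∑ j, ‖g j x‖ ^ 2) (ENNReal.ofReal p') μX :=
    memLp_finset_sum Finset.univ fun i _ => hgiMem i
  have hρnn : ∀ x : X, (0:ℝ) ≤ ∑ j, ‖g j x‖ ^ 2 := fun x => by positivity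
  have hρInt : Integrable (fun x => (∑ j, ‖g j x‖ ^ 2) ^ p') μX := by
    have h := hρMem.integrable_norm_rpow hP'zero hP'top
    refine h.congr (Filter.Eventually.of_forall fun x => ?_)
    show ‖∑ j, ‖g j x‖ ^ 2‖ ^ (ENNReal.ofReal p').toReal = (∑ j, ‖g j x‖ ^ 2) ^ p'
    rw [htoR', Real.norm_of_nonneg (hρnn x)]
  -- b facts
  have hbmeas : AEStronglyMeasurable b μX := hbLp.1
  have hbInt : Integrable (fun x => b x ^ p) μX := by
    have h := hbLp.integrable_norm_rpow hPzero hPtop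
    refine h.congr (Filter.Eventually.of_forall fun x => ?_)
    show ‖b x‖ ^ (ENNReal.ofReal p).toReal = b x ^ p
    rw [htoR, Real.norm_of_nonneg (hb x)]
  -- integrability of b·‖g i‖²
  have hbgi : ∀ i : Fin m, Integrable (fun x => b x * ‖g i x‖ ^ 2) μX := fun i => by
    refine Integrable.mono' ((hbInt.div_const p).add ((hInt2 i).div_const p'))
      (hbmeas.mul (hgmeas i)) (Filter.Eventually.of_forall fun x => ?_)
    rw [Real.norm_of_nonneg (mul_nonneg (hb x) (by positivity))]
    exact Real.young_inequality_of_nonneg (hb x) (by positivity) hconj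
  -- Bessel inequality and the density bound
  have hBes : ∀ f : Lp ℂ 2 μX,
      ∑ j, ‖(inner ℂ (g j) (R f) : ℂ)‖ ^ 2 ≤ ((inner ℂ f (R f) : ℂ)).re :=
    form_bessel R hRsym hRpos g hortho
  have hden := hdensity m g hBes
  have hsum1 : (∑ j, ((inner ℂ (g j) (R (g j)) : ℂ)).re) = (m:ℝ) := by
    have h1 : ∀ j : Fin m, ((inner ℂ (g j) (R (g j)) : ℂ)).re = 1 := fun j => by
      rw [hortho j j]; simp
    rw [Finset.sum_congr rfl fun j _ => h1 j]
    simp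
  rw [hsum1] at hden
  have hIρ : ∫ x, (∑ j, ‖g j x‖ ^ 2) ^ p' ∂μX ≤ (m:ℝ) / K := by
    rw [le_div_iff₀ hK]
    linarith
  -- Young's inequality with optimal scaling
  have hbase : (0:ℝ) < p' * K * μ := by positivity
  set s : ℝ := (p' * K * μ) ^ (1/p') with hs
  have hs0 : 0 < s := Real.rpow_pos_of_pos hbase _
  have hsne : s ≠ 0 := ne_of_gt hs0
  have hsp' : s ^ p' = p' * K * μ := by
    rw [hs, ← Real.rpow_mul hbase.le, one_div, inv_mul_cancel₀ hp'ne, Real.rpow_one]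
  have hsp : s ^ p = (p' * K * μ) ^ (p - 1) := by
    rw [hs, ← Real.rpow_mul hbase.le]
    congr 1
    rw [hp'def]
    field_simp
  have htp : s⁻¹ ^ p = ((p' * K * μ) ^ (p - 1))⁻¹ := by
    rw [Real.inv_rpow hs0.le, hsp]
  have hyoung : ∀ x : X, b x * (∑ j, ‖g j x‖ ^ 2)
      ≤ ((p' * K * μ) ^ (p - 1))⁻¹ / p * b x ^ p
        + (K * μ) * (∑ j, ‖g j x‖ ^ 2) ^ p' := by
    intro x
    have h := Real.young_inequality_of_nonneg
      (mul_nonneg (inv_nonneg.mpr hs0.le) (hb x)) (mul_nonneg hs0.le (hρnn x)) hconj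
    have e1 : s⁻¹ * b x * (s * (∑ j, ‖g j x‖ ^ 2)) = b x * (∑ j, ‖g j x‖ ^ 2) := by
      field_simp
    have e2 : (s⁻¹ * b x) ^ p = ((p' * K * μ) ^ (p - 1))⁻¹ * b x ^ p := by
      rw [Real.mul_rpow (inv_nonneg.mpr hs0.le) (hb x), htp]
    have e3 : (s * (∑ j, ‖g j x‖ ^ 2)) ^ p' = (p' * K * μ) * (∑ j, ‖g j x‖ ^ 2) ^ p' := by
      rw [Real.mul_rpow hs0.le (hρnn x), hsp']
    rw [e1, e2, e3] at h
    calc b x * (∑ j, ‖g j x‖ ^ 2)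
        ≤ ((p' * K * μ) ^ (p - 1))⁻¹ * b x ^ p / p
          + (p' * K * μ) * (∑ j, ‖g j x‖ ^ 2) ^ p' / p' := h
      _ = ((p' * K * μ) ^ (p - 1))⁻¹ / p * b x ^ p
          + (K * μ) * (∑ j, ‖g j x‖ ^ 2) ^ p' := by
          field_simp
  have hintg : Integrable (fun x => ((p' * K * μ) ^ (p - 1))⁻¹ / p * b x ^ p
      + (K * μ) * (∑ j, ‖g j x‖ ^ 2) ^ p') μX :=
    (hbInt.const_mul _).add (hρInt.const_mul _)
  have hmain : ∫ x, b x * (∑ j, ‖g j x‖ ^ 2) ∂μX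
      ≤ ((p' * K * μ) ^ (p - 1))⁻¹ / p * ∫ x, b x ^ p ∂μX
        + (K * μ) * ∫ x, (∑ j, ‖g j x‖ ^ 2) ^ p' ∂μX := by
    have h := integral_mono_of_nonneg
      (Filter.Eventually.of_forall fun x => mul_nonneg (hb x) (hρnn x))
      hintg (Filter.Eventually.of_forall hyoung)
    calc ∫ x, b x * (∑ j, ‖g j x‖ ^ 2) ∂μX
        ≤ ∫ x, (((p' * K * μ) ^ (p - 1))⁻¹ / p * b x ^ p
            + (K * μ) * (∑ j, ‖g j x‖ ^ 2) ^ p') ∂μX := h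
      _ = ((p' * K * μ) ^ (p - 1))⁻¹ / p * ∫ x, b x ^ p ∂μX
          + (K * μ) * ∫ x, (∑ j, ‖g j x‖ ^ 2) ^ p' ∂μX := by
          rw [integral_add (hbInt.const_mul _) (hρInt.const_mul _),
            integral_const_mul, integral_const_mul]
  have hsum2 : (∑ i, ∫ x, b x * ‖g i x‖ ^ 2 ∂μX) = ∫ x, b x * (∑ j, ‖g j x‖ ^ 2) ∂μX := by
    rw [← integral_finset_sum Finset.univ fun i _ => hbgi i]
    refine integral_congr_ae (Filter.Eventually.of_forall fun x => ?_)
    show (∑ i, b x * ‖g i x‖ ^ 2) = b x * ∑ j, ‖g j x‖ ^ 2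
    exact (Finset.mul_sum _ _ _).symm
  -- the constant identity
  have hpp : p ^ p = p ^ (p - 1) * p := by
    have h := Real.rpow_add hp0 (p - 1) 1
    rw [Real.rpow_one] at h
    rw [show p - 1 + 1 = p from by ring] at h
    exact h
  have hK1 : K ^ (1 - p) = (K ^ (p - 1))⁻¹ := by
    rw [show (1 - p : ℝ) = -(p - 1) from by ring, Real.rpow_neg hK.le]
  have hμ1 : μ ^ (1 - p) = (μ ^ (p - 1))⁻¹ := by
    rw [show (1 - p : ℝ) = -(p - 1) from by ring, Real.rpow_neg hμ.le]
  have hKp : (0:ℝ) < K ^ (p - 1) := Real.rpow_pos_of_pos hK _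
  have hμp : (0:ℝ) < μ ^ (p - 1) := Real.rpow_pos_of_pos hμ _
  have hppos : (0:ℝ) < p ^ (p - 1) := Real.rpow_pos_of_pos hp0 _
  have h1pos : (0:ℝ) < (p - 1) ^ (p - 1) := Real.rpow_pos_of_pos hp1 _
  have hCeq : ((p' * K * μ) ^ (p - 1))⁻¹ / p
      = K ^ (1 - p) * ((p - 1) ^ (p - 1) / p ^ p) * μ ^ (1 - p) := by
    have hA : (p' * K * μ) ^ (p - 1) = p' ^ (p - 1) * K ^ (p - 1) * μ ^ (p - 1) := by
      rw [Real.mul_rpow (by positivity) hμ.le, Real.mul_rpow hp'0.le hK.le]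
    have hB : p' ^ (p - 1) = p ^ (p - 1) / (p - 1) ^ (p - 1) := by
      rw [hp'def, Real.div_rpow hp0.le hp1.le]
    rw [hA, hB, hpp, hK1, hμ1]
    field_simp
    try ring
    try exact Or.inl trivial
  -- final computation
  rw [show (-p + 1 : ℝ) = 1 - p from by ring]
  calc ∑ i, ((∫ x, b x * ‖g i x‖ ^ 2 ∂μX) - μ)
      = (∑ i, ∫ x, b x * ‖g i x‖ ^ 2 ∂μX) - (m:ℝ) * μ := by
        rw [Finset.sum_sub_distrib]
        simp [Finset.sum_const, Finset.card_univ, nsmul_eq_mul]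
    _ = (∫ x, b x * (∑ j, ‖g j x‖ ^ 2) ∂μX) - (m:ℝ) * μ := by rw [hsum2]
    _ ≤ (((p' * K * μ) ^ (p - 1))⁻¹ / p * ∫ x, b x ^ p ∂μX
          + (K * μ) * ∫ x, (∑ j, ‖g j x‖ ^ 2) ^ p' ∂μX) - (m:ℝ) * μ := by
        linarith [hmain]
    _ ≤ (((p' * K * μ) ^ (p - 1))⁻¹ / p * ∫ x, b x ^ p ∂μX
          + (K * μ) * ((m:ℝ) / K)) - (m:ℝ) * μ := by
        have h9 : (K * μ) * ∫ x, (∑ j, ‖g j x‖ ^ 2) ^ p' ∂μX ≤ (K * μ) * ((m:ℝ) / K) :=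
          mul_le_mul_of_nonneg_left hIρ (by positivity)
        linarith
    _ = ((p' * K * μ) ^ (p - 1))⁻¹ / p * ∫ x, b x ^ p ∂μX := by
        field_simp
        ring
    _ = K ^ (1 - p) * ((p - 1) ^ (p - 1) / p ^ p) * μ ^ (1 - p) * ∫ x, b x ^ p ∂μX := by
        rw [hCeq]
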